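/- Let p, q be positive integers and let G := (ℤ/pℤ) * (ℤ/qℤ) be the free product of the cyclic groups of orders p and q. Then every surjective group homomorphism φ : G → G is an isomorphism. -/

import Mathlib

open Monoid Monoid.CoprodI Monoid.CoprodI.Word

namespace Stmt5Aux

universe u v

variable {ι : Type u} [DecidableEq ι] {G : ι → Type v} [∀ i, Group (G i)]
  [∀ i, DecidableEq (G i)]

set_option linter.unusedSectionVars false

/-- The truncated action of `G i` on words: genuine left multiplication when the
result stays within length `n`, identity otherwise. -/
def truncSmul (n : ℕ) {i : ι} (m : G i) (w : Word G) : Word G :=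
  if (equivPair i w).tail.toList.length + 1 ≤ n then m • w else w

theorem rcons_length {i : ι} (p : Pair G i) :
    (rcons p).toList.length ≤ p.tail.toList.length + 1 := by
  rw [rcons]
  split
  · omega
  · simp [cons]

theorem tail_length_le {i : ι} (w : Word G) :
    (equivPair i w).tail.toList.length ≤ w.toList.length := by
  conv_rhs => rw [show w = rcons (equivPair i w) by
    rw [← equivPair_symm, Equiv.symm_apply_apply]]
  rw [rcons]
  split
  · exact le_rfl
  · simp [cons]

theorem tail_truncSmul (n : ℕ) {i : ι} (m : G i) (w : Word G) :
    (equivPair i (truncSmul n m w)).tail = (equivPair i w).tail := by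
  rw [truncSmul]
  split
  · rw [smul_eq_of_smul, equivPair_smul_same]
  · rfl

theorem truncSmul_length (n : ℕ) {i : ι} (m : G i) (w : Word G)
    (hw : w.toList.length ≤ n) : (truncSmul n m w).toList.length ≤ n := by
  rw [truncSmul]
  split
  case isTrue h =>
    rw [smul_def]
    exact le_trans (rcons_length _) h
  case isFalse => exact hw

theorem truncSmul_one (n : ℕ) (i : ι) (w : Word G) :
    truncSmul n (1 : G i) w = w := by
  rw [truncSmul]
  split
  · rw [one_smul]
  · rfl

theorem truncSmul_mul (n : ℕ) {i : ι} (m m' : G i) (w : Word G) :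
    truncSmul n (m * m') w = truncSmul n m (truncSmul n m' w) := by
  rw [show truncSmul n m (truncSmul n m' w) =
      if (equivPair i (truncSmul n m' w)).tail.toList.length + 1 ≤ n then
        m • (truncSmul n m' w) else truncSmul n m' w from rfl,
    tail_truncSmul]
  by_cases h : (equivPair i w).tail.toList.length + 1 ≤ n
  · rw [if_pos h, truncSmul, if_pos h, truncSmul, if_pos h, mul_smul]
  · rw [if_neg h, truncSmul, if_neg h, truncSmul, if_neg h]

/-- Bounded-length words. -/
def BWord (G : ι → Type v) [∀ i, Group (G i)] (n : ℕ) : Type (max u v) :=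
  {w : Word G // w.toList.length ≤ n}

instance (n : ℕ) [Finite ι] [∀ i, Finite (G i)] : Finite (BWord G n) := by
  have : Finite {l : List (Σ i, G i) // l.length ≤ n} :=
    (List.finite_length_le (Σ i, G i) n).to_subtype
  exact Finite.of_injective
    (fun w : BWord G n => (⟨w.1.toList, w.2⟩ : {l : List (Σ i, G i) // l.length ≤ n}))
    (fun a b h => Subtype.ext (Word.ext (congrArg Subtype.val h)))

def truncAction (n : ℕ) (i : ι) : MulAction (G i) (BWord G n) where
  smul m w := ⟨truncSmul n m w.1, truncSmul_length n m w.1 w.2⟩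
  one_smul w := Subtype.ext (truncSmul_one n i w.1)
  mul_smul m m' w := Subtype.ext (truncSmul_mul n m m' w.1)

/-- The homomorphism to the permutation group of bounded words. -/
def truncHom (n : ℕ) : CoprodI G →* Equiv.Perm (BWord G n) :=
  CoprodI.lift (fun i => @MulAction.toPermHom (G i) (BWord G n) _ (truncAction n i))

theorem truncHom_of (n : ℕ) {i : ι} (m : G i) (w : BWord G n) :
    truncHom n (CoprodI.of m) w = ⟨truncSmul n m w.1, truncSmul_length n m w.1 w.2⟩ := by
  rw [truncHom, CoprodI.lift_of]
  rfl

theorem truncHom_prod (n : ℕ) (w : Word G) (hw : w.toList.length ≤ n) :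
    truncHom n w.prod ⟨Word.empty, by simp⟩ = ⟨w, hw⟩ := by
  induction w using consRecOn with
  | empty => simp [prod_empty]; rfl
  | cons i m w h1 h2 ih =>
    have hlen : w.toList.length + 1 ≤ n := by simpa [cons] using hw
    rw [prod_cons, map_mul, Equiv.Perm.coe_mul]
    erw [Function.comp_apply, ih (by omega), truncHom_of]
    apply Subtype.ext
    show truncSmul n m w = cons m w h1 h2
    rw [truncSmul, equivPair_eq_of_fstIdx_ne h1]
    dsimp only
    rw [if_pos hlen, cons_eq_smul, smul_eq_of_smul]

theorem exists_sep [Finite ι] [∀ i, Finite (G i)] {g : CoprodI G} (hg : g ≠ 1) :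
    ∃ (P : Type (max u v)) (_ : Group P) (_ : Finite P) (π : CoprodI G →* P), π g ≠ 1 := by
  set n := (Word.equiv g).toList.length with hn
  refine ⟨Equiv.Perm (BWord G n), inferInstance, ?_, truncHom n, ?_⟩
  · exact Finite.of_injective (fun e : Equiv.Perm (BWord G n) => (⇑e, ⇑e.symm))
      (fun a b h => by
        apply Equiv.ext; intro x
        exact congrFun (congrArg Prod.fst h) x)
  · intro hπ
    have hgp : (Word.equiv g).prod = g := by
      have := (Word.equiv (M := G)).symm_apply_apply g
      simpa [Word.equiv] using this
    have h0 := truncHom_prod n (Word.equiv g) le_rfl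
    rw [hgp, hπ] at h0
    change (⟨Word.empty, _⟩ : BWord G n) = _ at h0
    have h1 : (Word.empty : Word G) = Word.equiv g := congrArg Subtype.val h0
    apply hg
    calc g = (Word.equiv g).prod := hgp.symm
      _ = (Word.empty : Word G).prod := by rw [← h1]
      _ = 1 := prod_empty

end Stmt5Aux

section Glue

variable {A B : Type} [Group A] [Group B] [Finite A] [Finite B]
  [DecidableEq A] [DecidableEq B]

open Stmt5Aux

@[reducible] private def MF (A B : Type) : Bool → Type := fun b => cond b A B

instance : ∀ b, Group (MF A B b) := fun b => by
  cases b
  · exact inferInstanceAs (Group B)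
  · exact inferInstanceAs (Group A)

instance : ∀ b, Finite (MF A B b) := fun b => by
  cases b
  · exact inferInstanceAs (Finite B)
  · exact inferInstanceAs (Finite A)

instance : ∀ b, DecidableEq (MF A B b) := fun b => by
  cases b
  · exact inferInstanceAs (DecidableEq B)
  · exact inferInstanceAs (DecidableEq A)

def toI : Coprod A B →* CoprodI (MF A B) :=
  Coprod.lift (CoprodI.of : MF A B true →* CoprodI (MF A B))
    (CoprodI.of : MF A B false →* CoprodI (MF A B))

def fromI : CoprodI (MF A B) →* Coprod A B :=
  CoprodI.lift (fun b => Bool.rec (Coprod.inr : B →* Coprod A B)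
    (Coprod.inl : A →* Coprod A B) b)

theorem fromI_toI (x : Coprod A B) : fromI (toI x) = x := by
  have : (fromI.comp (toI : Coprod A B →* CoprodI (MF A B))) = MonoidHom.id _ := by
    apply Coprod.hom_ext
    · ext a
      simp only [toI, fromI, MonoidHom.coe_comp, Function.comp_apply, MonoidHom.id_apply,
        Coprod.lift_apply_inl]
      exact CoprodI.lift_of _ _
    · ext b
      simp only [toI, fromI, MonoidHom.coe_comp, Function.comp_apply, MonoidHom.id_apply,
        Coprod.lift_apply_inr]
      exact CoprodI.lift_of _ _
  exact DFunLike.congr_fun this x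

theorem toI_injective : Function.Injective (toI : Coprod A B →* CoprodI (MF A B)) :=
  fun x y h => by rw [← fromI_toI x, ← fromI_toI y, h]

theorem coprod_hopfian (φ : Coprod A B →* Coprod A B)
    (hφ : Function.Surjective φ) : Function.Bijective φ := by
  refine ⟨?_, hφ⟩
  rw [injective_iff_map_eq_one]
  intro g hg
  by_contra hg1
  have hIg : toI g ≠ (1 : CoprodI (MF A B)) := by
    intro h
    apply hg1
    exact toI_injective (by rw [h, map_one])
  obtain ⟨P, _, _, π', hπ'⟩ := exists_sep hIg
  set π : Coprod A B →* P := π'.comp toI with hπdef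
  haveI : Finite (Coprod A B →* P) := by
    apply Finite.of_injective
      (fun ψ : Coprod A B →* P =>
        ((⇑(ψ.comp Coprod.inl) : A → P), (⇑(ψ.comp Coprod.inr) : B → P)))
    intro ψ₁ ψ₂ h
    apply Coprod.hom_ext
    · exact DFunLike.coe_injective (congrArg Prod.fst h)
    · exact DFunLike.coe_injective (congrArg Prod.snd h)
  have hT : Function.Injective (fun ψ : Coprod A B →* P => ψ.comp φ) := by
    intro ψ₁ ψ₂ h
    exact (MonoidHom.cancel_right hφ).mp h
  have hTs : Function.Surjective (fun ψ : Coprod A B →* P => ψ.comp φ) :=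
    Finite.surjective_of_injective hT
  obtain ⟨ψ, hψ⟩ := hTs π
  have hπg : π g = 1 := by
    rw [← hψ]
    show ψ (φ g) = 1
    rw [hg, map_one]
  exact hπ' hπg

end Glue

/-- Every surjective endomorphism of the free product
`(ℤ/pℤ) * (ℤ/qℤ)` is an isomorphism. -/
theorem stmt_5 (p q : ℕ) (hp : 0 < p) (hq : 0 < q)
    (φ : Monoid.Coprod (Multiplicative (ZMod p)) (Multiplicative (ZMod q)) →*
         Monoid.Coprod (Multiplicative (ZMod p)) (Multiplicative (ZMod q)))
    (hφ : Function.Surjective φ) : Function.Bijective φ := by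
  haveI : NeZero p := ⟨hp.ne'⟩
  haveI : NeZero q := ⟨hq.ne'⟩
  exact coprod_hopfian φ hφ
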